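/- For all n ≥ 0 and k ≥ 1, the number of lower k-run overpartitions of n is at most the number of lower k-run overpartitions of n+1, i.e., p̄_k(n) ≤ p̄_k(n+1). -/

import Mathlib

open scoped BigOperators
open Real

/-- An overpartition: a multiset of (non-overlined) positive parts together with a
finite set of overlined part sizes (the last occurrence of a part size may be overlined). -/
structure Overpartition where
  parts : Multiset ℕ
  overs : Finset ℕ
  parts_pos : ∀ p ∈ parts, 0 < p
  over_pos : ∀ p ∈ overs, 0 < p

/-- The size (sum of all parts) of an overpartition. -/
def Overpartition.size (μ : Overpartition) : ℕ := μ.parts.sum + ∑ p ∈ μ.overs, p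

/-- The number of parts of an overpartition. -/
def Overpartition.numParts (μ : Overpartition) : ℕ := Multiset.card μ.parts + μ.overs.card

/-- Lower `k`-run condition: every overlined part lies in a run of exactly `k` consecutive
overlined parts `j+1, …, j+k`, with no part of size `j` (overlined or not) and no overlined
part of size `j+k+1`. -/
def IsLowerKRun (k : ℕ) (μ : Overpartition) : Prop :=
  ∀ m ∈ μ.overs, ∃ j : ℕ, j + 1 ≤ m ∧ m ≤ j + k ∧
    (∀ i : ℕ, j + 1 ≤ i → i ≤ j + k → i ∈ μ.overs) ∧
    j ∉ μ.parts ∧ j ∉ μ.overs ∧ j + k + 1 ∉ μ.overs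

/-- Upper `k`-run condition: every overlined part lies in a run of overlined parts
`j+1, …, j+k`, with no overlined part of size `j` and no part of any kind of size `j+k+1`. -/
def IsUpperKRun (k : ℕ) (μ : Overpartition) : Prop :=
  ∀ m ∈ μ.overs, ∃ j : ℕ, j + 1 ≤ m ∧ m ≤ j + k ∧
    (∀ i : ℕ, j + 1 ≤ i → i ≤ j + k → i ∈ μ.overs) ∧
    j ∉ μ.overs ∧ j + k + 1 ∉ μ.parts ∧ j + k + 1 ∉ μ.overs

/-- `p̄ₖ(n)`, the number of lower `k`-run overpartitions of `n`. -/
noncomputable def lowerKRunCount (k n : ℕ) : ℕ :=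
  Nat.card {μ : Overpartition // μ.size = n ∧ IsLowerKRun k μ}

/-- The number of upper `k`-run overpartitions of `n`. -/
noncomputable def upperKRunCount (k n : ℕ) : ℕ :=
  Nat.card {μ : Overpartition // μ.size = n ∧ IsUpperKRun k μ}

/-- `p̄ₖ(ℓ,n)`, the number of upper `k`-run overpartitions of `n` with exactly `ℓ` parts. -/
noncomputable def upperKRunCount2 (k l n : ℕ) : ℕ :=
  Nat.card {μ : Overpartition // μ.size = n ∧ μ.numParts = l ∧ IsUpperKRun k μ}

/-- The one-variable generating function `Ḡₖ(q)` of lower `k`-run overpartitions. -/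
noncomputable def Gbar (k : ℕ) (q : ℂ) : ℂ := ∑' n : ℕ, (lowerKRunCount k n : ℂ) * q ^ n

/-- The two-variable generating function `Ḡₖ(x;q)` of `k`-run overpartitions. -/
noncomputable def Gbar2 (k : ℕ) (x q : ℂ) : ℂ :=
  ∑' p : ℕ × ℕ, (upperKRunCount2 k p.1 p.2 : ℂ) * x ^ p.1 * q ^ p.2

/-- The finite q-Pochhammer symbol `(a;q)ₙ`. -/
def qPoch (a q : ℂ) (n : ℕ) : ℂ := ∏ j ∈ Finset.range n, (1 - a * q ^ j)

/-- The infinite q-Pochhammer symbol `(a;q)_∞`. -/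
noncomputable def qPochInf (a q : ℂ) : ℂ := ∏' j : ℕ, (1 - a * q ^ j)

-- ==== auxiliary material ====

lemma Overpartition.ext' {μ ν : Overpartition} (h1 : μ.parts = ν.parts)
    (h2 : μ.overs = ν.overs) : μ = ν := by
  cases μ; cases ν; simp_all

/-- Finiteness of the set of lower k-run overpartitions of n. -/
noncomputable def opEmbed (n : ℕ) (μ : Overpartition) (h : μ.size = n) :
    Nat.Partition n :=
  ⟨μ.parts + μ.overs.val, by
      intro i hi
      rcases Multiset.mem_add.1 hi with h' | h'
      · exact μ.parts_pos i h'
      · exact μ.over_pos i h', by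
      have : ∑ p ∈ μ.overs, p = μ.overs.val.sum := by
        rw [Finset.sum_eq_multiset_sum, Multiset.map_id']
      rw [Multiset.sum_add, ← h, Overpartition.size, this]⟩

instance finiteLower (k n : ℕ) :
    Finite {μ : Overpartition // μ.size = n ∧ IsLowerKRun k μ} := by
  have key : ∀ (μ : Overpartition), μ.size = n → ∀ p ∈ μ.overs, p ≤ n := by
    intro μ h p hp
    have h1 : p ≤ ∑ q ∈ μ.overs, q := Finset.single_le_sum (f := fun q => q)
      (fun i _ => Nat.zero_le i) hp
    have h2 : μ.size = μ.parts.sum + ∑ q ∈ μ.overs, q := rfl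
    omega
  apply Finite.of_injective (β := Nat.Partition n × Set (Fin (n + 1)))
    (fun μ => (opEmbed n μ.1 μ.2.1, {i : Fin (n + 1) | (i : ℕ) ∈ μ.1.overs}))
  rintro ⟨μ, hμ, _⟩ ⟨ν, hν, _⟩ h
  simp only [Prod.mk.injEq, opEmbed, Nat.Partition.mk.injEq] at h
  obtain ⟨h1, h2⟩ := h
  have hover : μ.overs = ν.overs := by
    ext m
    constructor
    · intro hm
      have hmn : m ≤ n := key μ hμ m hm
      have : (⟨m, by omega⟩ : Fin (n + 1)) ∈ {i : Fin (n + 1) | (i : ℕ) ∈ ν.overs} := by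
        rw [← h2]; simp only [Set.mem_setOf_eq]; exact hm
      simpa using this
    · intro hm
      have hmn : m ≤ n := key ν hν m hm
      have : (⟨m, by omega⟩ : Fin (n + 1)) ∈ {i : Fin (n + 1) | (i : ℕ) ∈ μ.overs} := by
        rw [h2]; simp only [Set.mem_setOf_eq]; exact hm
      simpa using this
  have hparts : μ.parts = ν.parts := by
    have := h1
    rw [hover] at this
    exact add_right_cancel this
  exact Subtype.ext (Overpartition.ext' hparts hover)

/-- The problematic configuration for adding a part `1`. -/
def condB (μ : Overpartition) : Prop := 1 ∉ μ.parts ∧ 2 ∈ μ.overs ∧ 1 ∉ μ.overs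

instance (μ : Overpartition) : Decidable (condB μ) := by unfold condB; infer_instance

/-- Key structure extracted in the condB case. -/
lemma condB_run {k : ℕ} {μ : Overpartition} (hk : 1 ≤ k) (hr : IsLowerKRun k μ)
    (hB : condB μ) :
    (∀ i : ℕ, 2 ≤ i → i ≤ k + 1 → i ∈ μ.overs) ∧ k + 2 ∉ μ.overs := by
  obtain ⟨h1p, h2o, h1o⟩ := hB
  obtain ⟨j, hj1, hj2, hrun, hjp, hjo, hjk⟩ := hr 2 h2o
  have hj : j = 1 := by
    rcases Nat.lt_or_ge j 1 with h | h
    · exfalso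
      have : (1 : ℕ) ∈ μ.overs := hrun 1 (by omega) (by omega)
      exact h1o this
    · omega
  subst hj
  exact ⟨fun i hi1 hi2 => hrun i (by omega) (by omega), by
    have := hjk; simpa [add_comm, add_assoc, add_left_comm] using this⟩

/-- The injection at the level of overpartitions. -/
def bump (k : ℕ) (μ : Overpartition) : Overpartition :=
  if condB μ then
    { parts := (k + 1) ::ₘ μ.parts
      overs := insert 1 (μ.overs.erase (k + 1))
      parts_pos := by
        intro p hp
        rcases Multiset.mem_cons.1 hp with h | h
        · omega
        · exact μ.parts_pos p h
      over_pos := by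
        intro p hp
        rcases Finset.mem_insert.1 hp with h | h
        · omega
        · exact μ.over_pos p (Finset.mem_of_mem_erase h) }
  else
    { parts := 1 ::ₘ μ.parts
      overs := μ.overs
      parts_pos := by
        intro p hp
        rcases Multiset.mem_cons.1 hp with h | h
        · omega
        · exact μ.parts_pos p h
      over_pos := μ.over_pos }

lemma bump_size {k : ℕ} {μ : Overpartition} (hk : 1 ≤ k) (hr : IsLowerKRun k μ) :
    (bump k μ).size = μ.size + 1 := by
  by_cases hB : condB μ
  · obtain ⟨hrun, hk2⟩ := condB_run hk hr hB
    have hk1o : (k + 1) ∈ μ.overs := hrun (k + 1) (by omega) le_rfl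
    have h1o : (1 : ℕ) ∉ μ.overs := hB.2.2
    have h1e : (1 : ℕ) ∉ μ.overs.erase (k + 1) := fun h => h1o (Finset.mem_of_mem_erase h)
    have hsum : ∑ p ∈ μ.overs.erase (k + 1), p + (k + 1) = ∑ p ∈ μ.overs, p :=
      Finset.sum_erase_add _ _ hk1o
    simp only [bump, if_pos hB, Overpartition.size, Multiset.sum_cons,
      Finset.sum_insert h1e]
    omega
  · simp only [bump, if_neg hB, Overpartition.size, Multiset.sum_cons]
    omega

lemma bump_run {k : ℕ} {μ : Overpartition} (hk : 1 ≤ k) (hr : IsLowerKRun k μ) :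
    IsLowerKRun k (bump k μ) := by
  by_cases hB : condB μ
  · obtain ⟨hrun0, hk2⟩ := condB_run hk hr hB
    intro m hm
    simp only [bump, if_pos hB, Finset.mem_insert, Finset.mem_erase] at hm ⊢
    rcases Nat.lt_or_ge m (k + 1) with hmk | hmk
    · -- use j = 0
      have hm1 : 1 ≤ m := by
        rcases hm with h | ⟨_, h⟩
        · omega
        · exact μ.over_pos m h
      refine ⟨0, by omega, by omega, ?_, ?_, ?_, ?_⟩
      · intro i hi1 hi2
        rcases Nat.lt_or_ge i 2 with h | h
        · left; omega
        · right; exact ⟨by omega, hrun0 i h (by omega)⟩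
      · intro h
        rcases Multiset.mem_cons.1 h with h | h
        · omega
        · exact absurd (μ.parts_pos 0 h) (by omega)
      · rintro (h | ⟨_, h⟩)
        · omega
        · exact absurd (μ.over_pos 0 h) (by omega)
      · rintro (h | ⟨h, _⟩)
        · omega
        · omega
    · -- m ≥ k + 1 ; in fact m ≥ k + 2 and m ∈ μ.overs
      have hm' : m ≠ k + 1 ∧ m ∈ μ.overs := by
        rcases hm with h | h
        · omega
        · exact h
      have hmo : m ∈ μ.overs := hm'.2
      have hm2 : k + 2 ≤ m := by omega
      obtain ⟨j, hj1, hj2, hrun, hjp, hjo, hjk⟩ := hr m hmo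
      have hjge : k + 2 ≤ j := by
        by_contra h
        push_neg at h
        exact hk2 (hrun (k + 2) (by omega) (by omega))
      refine ⟨j, hj1, hj2, ?_, ?_, ?_, ?_⟩
      · intro i hi1 hi2
        right
        exact ⟨by omega, hrun i hi1 hi2⟩
      · intro h
        rcases Multiset.mem_cons.1 h with h | h
        · omega
        · exact hjp h
      · rintro (h | ⟨_, h⟩)
        · omega
        · exact hjo h
      · rintro (h | ⟨_, h⟩)
        · omega
        · exact hjk h
  · intro m hm
    simp only [bump, if_neg hB] at hm ⊢
    obtain ⟨j, hj1, hj2, hrun, hjp, hjo, hjk⟩ := hr m hm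
    have hjne1 : j ≠ 1 := by
      intro hj
      subst hj
      exact hB ⟨hjp, hrun 2 (by omega) (by omega), hjo⟩
    refine ⟨j, hj1, hj2, hrun, ?_, hjo, hjk⟩
    intro h
    rcases Multiset.mem_cons.1 h with h | h
    · exact hjne1 h
    · exact hjp h

lemma bump_inj {k : ℕ} (hk : 1 ≤ k) {μ ν : Overpartition}
    (hrμ : IsLowerKRun k μ) (hrν : IsLowerKRun k ν)
    (h : bump k μ = bump k ν) : μ = ν := by
  have hone : ∀ {ρ : Overpartition}, condB ρ → (1 : ℕ) ∉ (bump k ρ).parts := by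
    intro ρ hB hmem
    simp only [bump, if_pos hB] at hmem
    rcases Multiset.mem_cons.1 hmem with h' | h'
    · omega
    · exact hB.1 h'
  have hone' : ∀ {ρ : Overpartition}, ¬ condB ρ → (1 : ℕ) ∈ (bump k ρ).parts := by
    intro ρ hB
    simp [bump, if_neg hB]
  by_cases hBμ : condB μ <;> by_cases hBν : condB ν
  · -- both branch B
    have hp : (k + 1) ::ₘ μ.parts = (k + 1) ::ₘ ν.parts := by
      have := congrArg Overpartition.parts h
      simpa [bump, hBμ, hBν] using this
    have ho : insert 1 (μ.overs.erase (k + 1)) = insert 1 (ν.overs.erase (k + 1)) := by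
      have := congrArg Overpartition.overs h
      simpa [bump, hBμ, hBν] using this
    have h1μ : (1 : ℕ) ∉ μ.overs.erase (k + 1) := fun h' => hBμ.2.2 (Finset.mem_of_mem_erase h')
    have h1ν : (1 : ℕ) ∉ ν.overs.erase (k + 1) := fun h' => hBν.2.2 (Finset.mem_of_mem_erase h')
    have hkμ : (k + 1) ∈ μ.overs := (condB_run hk hrμ hBμ).1 (k + 1) (by omega) le_rfl
    have hkν : (k + 1) ∈ ν.overs := (condB_run hk hrν hBν).1 (k + 1) (by omega) le_rfl
    have he : μ.overs.erase (k + 1) = ν.overs.erase (k + 1) := by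
      have := congrArg (Finset.erase · 1) ho
      simpa [Finset.erase_insert h1μ, Finset.erase_insert h1ν] using this
    have hov : μ.overs = ν.overs := by
      have := congrArg (insert (k + 1)) he
      simpa [Finset.insert_erase hkμ, Finset.insert_erase hkν] using this
    exact Overpartition.ext' ((Multiset.cons_inj_right _).1 hp) hov
  · exact absurd (hone' hBν) (h ▸ hone hBμ)
  · exact absurd (hone' hBμ) (h ▸ hone hBν)
  · have hp : (1 : ℕ) ::ₘ μ.parts = 1 ::ₘ ν.parts := by
      have := congrArg Overpartition.parts h
      simpa [bump, hBμ, hBν] using this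
    have ho : μ.overs = ν.overs := by
      have := congrArg Overpartition.overs h
      simpa [bump, hBμ, hBν] using this
    exact Overpartition.ext' ((Multiset.cons_inj_right _).1 hp) ho

/-- p̄ₖ(n) ≤ p̄ₖ(n+1) for all n ≥ 0 and k ≥ 1. -/
theorem lowerKRunCount_mono (n k : ℕ) (hk : 1 ≤ k) :
    lowerKRunCount k n ≤ lowerKRunCount k (n + 1) := by
  apply Nat.card_le_card_of_injective
    (f := fun μ : {μ : Overpartition // μ.size = n ∧ IsLowerKRun k μ} =>
      (⟨bump k μ.1, by rw [bump_size hk μ.2.2, μ.2.1], bump_run hk μ.2.2⟩ :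
        {μ : Overpartition // μ.size = n + 1 ∧ IsLowerKRun k μ}))
  rintro ⟨μ, _, hμ⟩ ⟨ν, _, hν⟩ h
  exact Subtype.ext (bump_inj hk hμ hν (congrArg Subtype.val h))
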